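/- Let f = x1² − 2x1x2 + x2² − 2x1x3 − 2x2x3 + x3² ∈ ℂ[x1,x2,x3], the defining equation of the Cayley–Menger variety. Then the ED data isotropic locus equals the dual variety: DI(f) = V(f)* = V(x1x2 + x1x3 + x2x3); moreover DI(f) is strictly contained in V(f)* + (Q ∩ V(f)). -/

import Mathlib

open MvPolynomial Pointwise

/-- Gradient of a multivariate polynomial at a point. -/
noncomputable def grad {n : ℕ} (f : MvPolynomial (Fin n) ℂ) (x : Fin n → ℂ) : Fin n → ℂ :=
  fun i => eval x (pderiv i f)

/-- Zariski closure: zero locus of the ideal of all polynomials vanishing on `S`. -/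
def zclosure {σ : Type} (S : Set (σ → ℂ)) : Set (σ → ℂ) :=
  {x | ∀ p : MvPolynomial σ ℂ, (∀ s ∈ S, eval s p = 0) → eval x p = 0}

/-- Zero locus `V(f)`. -/
def Vp {n : ℕ} (f : MvPolynomial (Fin n) ℂ) : Set (Fin n → ℂ) := {x | eval x f = 0}

/-- Regular locus. -/
def RegL {n : ℕ} (f : MvPolynomial (Fin n) ℂ) : Set (Fin n → ℂ) :=
  {x | eval x f = 0 ∧ grad f x ≠ 0}

/-- Singular locus. -/
def SingL {n : ℕ} (f : MvPolynomial (Fin n) ℂ) : Set (Fin n → ℂ) :=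
  {x | eval x f = 0 ∧ grad f x = 0}

/-- ED correspondence: Zariski closure of pairs (u,x), x regular, u - x ∈ ℂ·∇f(x),
encoded as functions on `Fin n ⊕ Fin n`. -/
def EDcorr {n : ℕ} (f : MvPolynomial (Fin n) ℂ) : Set ((Fin n ⊕ Fin n) → ℂ) :=
  zclosure {w | ∃ u x : Fin n → ℂ, w = Sum.elim u x ∧ x ∈ RegL f ∧ ∃ t : ℂ, u - x = t • grad f x}

/-- ED data singular locus. -/
def DS {n : ℕ} (f : MvPolynomial (Fin n) ℂ) : Set (Fin n → ℂ) :=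
  {u | ∃ x, Sum.elim u x ∈ EDcorr f ∧ x ∈ SingL f}

/-- Dual variety. -/
def dualV {n : ℕ} (f : MvPolynomial (Fin n) ℂ) : Set (Fin n → ℂ) :=
  zclosure {y | ∃ (t : ℂ) (x : Fin n → ℂ), x ∈ RegL f ∧ y = t • grad f x}

/-- Isotropic quadric. -/
def isoQ (n : ℕ) : Set (Fin n → ℂ) := {x | ∑ i, (x i) ^ 2 = 0}

/-- ED data isotropic locus. -/
def DI {n : ℕ} (f : MvPolynomial (Fin n) ℂ) : Set (Fin n → ℂ) :=
  {u | ∃ x, Sum.elim u x ∈ EDcorr f ∧ x ∈ isoQ n ∩ Vp f}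

/-- Zariski-closed sets. -/
def IsZClosed {σ : Type} (S : Set (σ → ℂ)) : Prop := zclosure S = S

/-- Irreducibility with respect to Zariski-closed sets. -/
def IsZIrreducible {σ : Type} (S : Set (σ → ℂ)) : Prop :=
  S.Nonempty ∧ ∀ C₁ C₂ : Set (σ → ℂ), IsZClosed C₁ → IsZClosed C₂ →
    S ⊆ C₁ ∪ C₂ → S ⊆ C₁ ∨ S ⊆ C₂

/-- `C` is an irreducible component of `S`. -/
def IsIrredComponentOf {σ : Type} (C S : Set (σ → ℂ)) : Prop :=
  C ⊆ S ∧ IsZClosed C ∧ IsZIrreducible C ∧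
    ∀ C' : Set (σ → ℂ), IsZClosed C' → IsZIrreducible C' → C ⊆ C' → C' ⊆ S → C' = C


----------------------------------------------------------------------
-- auxiliary material
----------------------------------------------------------------------

noncomputable def Fcm : MvPolynomial (Fin 3) ℂ :=
  X 0 ^ 2 - 2 * X 0 * X 1 + X 1 ^ 2 - 2 * X 0 * X 2 - 2 * X 1 * X 2 + X 2 ^ 2

def Vg : Set (Fin 3 → ℂ) := {y : Fin 3 → ℂ | y 0 * y 1 + y 0 * y 2 + y 1 * y 2 = 0}

lemma pderiv_two {i : Fin 3} : pderiv i (2 : MvPolynomial (Fin 3) ℂ) = 0 := by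
  have : (2 : MvPolynomial (Fin 3) ℂ) = C 2 := (map_ofNat C 2).symm
  rw [this, pderiv_C]

lemma eval_Fcm (x : Fin 3 → ℂ) :
    eval x Fcm = x 0 ^ 2 - 2 * x 0 * x 1 + x 1 ^ 2 - 2 * x 0 * x 2 - 2 * x 1 * x 2 + x 2 ^ 2 := by
  simp [Fcm]

lemma grad_Fcm (x : Fin 3 → ℂ) (i : Fin 3) :
    grad Fcm x i = 4 * x i - 2 * (x 0 + x 1 + x 2) := by
  fin_cases i <;> (simp [grad, Fcm, pderiv_X, pow_two, pderiv_two]; ring)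

lemma zclosure_superset {σ : Type} (S : Set (σ → ℂ)) : S ⊆ zclosure S :=
  fun x hx p hp => hp x hx

lemma eval_aeval_poly {σ : Type} (c : σ → Polynomial ℂ) (p : MvPolynomial σ ℂ) (s : ℂ) :
    Polynomial.eval s (aeval c p) = eval (fun w => (c w).eval s) p := by
  induction p using MvPolynomial.induction_on with
  | C a => simp
  | add p q hp hq => simp [hp, hq]
  | mul_X p i hp => simp [hp]

lemma curve_mem_zclosure {σ : Type} (S : Set (σ → ℂ)) (c : σ → Polynomial ℂ)
    (h : ∀ s : ℂ, s ≠ 0 → (fun w => (c w).eval s) ∈ S) :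
    (fun w => (c w).eval 0) ∈ zclosure S := by
  intro p hp
  have hq : (aeval c p) = 0 := by
    apply Polynomial.eq_zero_of_infinite_isRoot
    apply Set.Infinite.mono (s := {s : ℂ | s ≠ 0})
    · intro s hs
      simp only [Set.mem_setOf_eq, Polynomial.IsRoot]
      rw [eval_aeval_poly]
      exact hp _ (h s hs)
    · exact (Set.finite_singleton 0).infinite_compl
  have := eval_aeval_poly c p 0
  rw [hq] at this
  simpa using this.symm

/-- The dual variety of the Cayley–Menger cubic... quadric. -/
lemma dual_eq : dualV Fcm = Vg := by
  apply subset_antisymm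
  · intro y hy
    have := hy (X 0 * X 1 + X 0 * X 2 + X 1 * X 2) ?_
    · simpa [Vg] using this
    · rintro s ⟨t, x, ⟨hf, -⟩, rfl⟩
      rw [eval_Fcm] at hf
      simp only [map_add, map_mul, eval_X, Pi.smul_apply, smul_eq_mul, grad_Fcm]
      linear_combination (-4 * t ^ 2) * hf
  · intro y hy
    have hy' : y 0 * y 1 + y 0 * y 2 + y 1 * y 2 = 0 := hy
    by_cases hy0 : y = 0
    · apply zclosure_superset
      refine ⟨0, ![0, -1, -1], ⟨?_, ?_⟩, ?_⟩
      · rw [eval_Fcm]; norm_num [Matrix.cons_val_two, Matrix.tail_cons, Matrix.head_cons]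
      · intro h
        have := congrFun h 0
        rw [grad_Fcm] at this
        norm_num [Matrix.cons_val_two, Matrix.tail_cons, Matrix.head_cons] at this
      · subst hy0; simp
    · apply zclosure_superset
      refine ⟨1, fun i => (y i - (y 0 + y 1 + y 2)) / 4, ⟨?_, ?_⟩, ?_⟩
      · rw [eval_Fcm]
        linear_combination (-1 / 4 : ℂ) * hy'
      · intro h
        apply hy0
        funext i
        have := congrFun h i
        rw [grad_Fcm] at this
        simp only [Pi.zero_apply] at this ⊢
        linear_combination this
      · funext i
        rw [one_smul, grad_Fcm]
        ring

-- polynomials vanishing on the ED correspondence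
noncomputable def p1 : MvPolynomial (Fin 3 ⊕ Fin 3) ℂ :=
  (X (.inl 0) - X (.inr 0)) * (X (.inl 1) - X (.inr 1)) +
  (X (.inl 0) - X (.inr 0)) * (X (.inl 2) - X (.inr 2)) +
  (X (.inl 1) - X (.inr 1)) * (X (.inl 2) - X (.inr 2))

noncomputable def p3 (i : Fin 3) : MvPolynomial (Fin 3 ⊕ Fin 3) ℂ :=
  (X (.inr 0) * ((X (.inl 1) - X (.inr 1)) + (X (.inl 2) - X (.inr 2))) +
   X (.inr 1) * ((X (.inl 0) - X (.inr 0)) + (X (.inl 2) - X (.inr 2))) +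
   X (.inr 2) * ((X (.inl 0) - X (.inr 0)) + (X (.inl 1) - X (.inr 1)))) *
    (2 * X (.inr i) - (X (.inr 0) + X (.inr 1) + X (.inr 2))) +
  2 * (X (.inr 0) ^ 2 + X (.inr 1) ^ 2 + X (.inr 2) ^ 2) * (X (.inl i) - X (.inr i))

lemma p1_vanishes :
    ∀ w ∈ {w | ∃ u x : Fin 3 → ℂ, w = Sum.elim u x ∧ x ∈ RegL Fcm ∧
        ∃ t : ℂ, u - x = t • grad Fcm x}, eval w p1 = 0 := by
  rintro w ⟨u, x, rfl, ⟨hf, -⟩, t, ht⟩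
  have hti : ∀ i, u i - x i = t * (4 * x i - 2 * (x 0 + x 1 + x 2)) := by
    intro i
    have := congrFun ht i
    simpa [grad_Fcm] using this
  rw [eval_Fcm] at hf
  simp only [p1, map_add, map_mul, map_sub, eval_X, Sum.elim_inl, Sum.elim_inr]
  rw [hti 0, hti 1, hti 2]
  linear_combination (-4 * t ^ 2) * hf

lemma p3_vanishes (i : Fin 3) :
    ∀ w ∈ {w | ∃ u x : Fin 3 → ℂ, w = Sum.elim u x ∧ x ∈ RegL Fcm ∧
        ∃ t : ℂ, u - x = t • grad Fcm x}, eval w (p3 i) = 0 := by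
  rintro w ⟨u, x, rfl, ⟨hf, -⟩, t, ht⟩
  have hti : ∀ j, u j - x j = t * (4 * x j - 2 * (x 0 + x 1 + x 2)) := by
    intro j
    have := congrFun ht j
    simpa [grad_Fcm] using this
  simp only [p3, map_add, map_mul, map_sub, map_pow, map_ofNat, eval_X,
    Sum.elim_inl, Sum.elim_inr]
  rw [hti 0, hti 1, hti 2, hti i]
  ring

lemma DI_sub : DI Fcm ⊆ Vg := by
  rintro u ⟨x, hE, hiso, hVp⟩
  have hσ : x 0 ^ 2 + x 1 ^ 2 + x 2 ^ 2 = 0 := by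
    have : ∑ i, (x i) ^ 2 = 0 := hiso
    simpa [Fin.sum_univ_three] using this
  have hf : x 0 ^ 2 - 2 * x 0 * x 1 + x 1 ^ 2 - 2 * x 0 * x 2 - 2 * x 1 * x 2 + x 2 ^ 2 = 0 := by
    have : eval x Fcm = 0 := hVp
    rwa [eval_Fcm] at this
  have hgx : x 0 * x 1 + x 0 * x 2 + x 1 * x 2 = 0 := by
    linear_combination hσ / 2 - hf / 2
  have he1 : x 0 + x 1 + x 2 = 0 := by
    have h2 : (x 0 + x 1 + x 2) ^ 2 = 0 := by linear_combination hσ + 2 * hgx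
    exact sq_eq_zero_iff.mp h2
  have h1 : (u 0 - x 0) * (u 1 - x 1) + (u 0 - x 0) * (u 2 - x 2) +
      (u 1 - x 1) * (u 2 - x 2) = 0 := by
    have := hE p1 p1_vanishes
    simpa [p1] using this
  have h3 : ∀ i : Fin 3,
      (x 0 * ((u 1 - x 1) + (u 2 - x 2)) + x 1 * ((u 0 - x 0) + (u 2 - x 2)) +
        x 2 * ((u 0 - x 0) + (u 1 - x 1))) * (2 * x i - (x 0 + x 1 + x 2)) +
        2 * (x 0 ^ 2 + x 1 ^ 2 + x 2 ^ 2) * (u i - x i) = 0 := by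
    intro i
    have := hE (p3 i) (p3_vanishes i)
    simpa [p3] using this
  have hβi : ∀ i : Fin 3,
      (x 0 * ((u 1 - x 1) + (u 2 - x 2)) + x 1 * ((u 0 - x 0) + (u 2 - x 2)) +
        x 2 * ((u 0 - x 0) + (u 1 - x 1))) * x i = 0 := by
    intro i
    linear_combination (h3 i) / 2 +
      ((x 0 * ((u 1 - x 1) + (u 2 - x 2)) + x 1 * ((u 0 - x 0) + (u 2 - x 2)) +
        x 2 * ((u 0 - x 0) + (u 1 - x 1))) / 2) * he1 - (u i - x i) * hσ
  have hβ : x 0 * ((u 1 - x 1) + (u 2 - x 2)) + x 1 * ((u 0 - x 0) + (u 2 - x 2)) +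
      x 2 * ((u 0 - x 0) + (u 1 - x 1)) = 0 := by
    have h2 : (x 0 * ((u 1 - x 1) + (u 2 - x 2)) + x 1 * ((u 0 - x 0) + (u 2 - x 2)) +
        x 2 * ((u 0 - x 0) + (u 1 - x 1))) ^ 2 = 0 := by
      linear_combination ((u 1 - x 1) + (u 2 - x 2)) * hβi 0 +
        ((u 0 - x 0) + (u 2 - x 2)) * hβi 1 + ((u 0 - x 0) + (u 1 - x 1)) * hβi 2
    exact sq_eq_zero_iff.mp h2
  show u 0 * u 1 + u 0 * u 2 + u 1 * u 2 = 0
  linear_combination h1 + hβ + hgx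

lemma zero_mem_iso_Vp : (0 : Fin 3 → ℂ) ∈ isoQ 3 ∩ Vp Fcm := by
  constructor
  · show ∑ i : Fin 3, (0 : ℂ) ^ 2 = 0
    simp
  · show eval 0 Fcm = 0
    rw [eval_Fcm]; norm_num

lemma DI_sup : Vg ⊆ DI Fcm := by
  intro u hu
  have hu' : u 0 * u 1 + u 0 * u 2 + u 1 * u 2 = 0 := hu
  refine ⟨0, ?_, zero_mem_iso_Vp⟩
  by_cases hu0 : u = 0
  · -- curve through the origin with constant direction
    subst hu0
    have key := curve_mem_zclosure
      {w | ∃ u' x' : Fin 3 → ℂ, w = Sum.elim u' x' ∧ x' ∈ RegL Fcm ∧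
        ∃ t : ℂ, u' - x' = t • grad Fcm x'}
      (Sum.elim (fun i => Polynomial.C ((![0, -1, -1] : Fin 3 → ℂ) i) * Polynomial.X)
                (fun i => Polynomial.C ((![0, -1, -1] : Fin 3 → ℂ) i) * Polynomial.X)) ?_
    · have heq : (fun w => (Sum.elim
          (fun i => Polynomial.C ((![0, -1, -1] : Fin 3 → ℂ) i) * Polynomial.X)
          (fun i => Polynomial.C ((![0, -1, -1] : Fin 3 → ℂ) i) * Polynomial.X) w).eval (0 : ℂ))
          = Sum.elim (0 : Fin 3 → ℂ) (0 : Fin 3 → ℂ) := by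
        funext w
        cases w <;> simp only [Sum.elim_inl, Sum.elim_inr, Polynomial.eval_add,
          Polynomial.eval_mul, Polynomial.eval_C, Polynomial.eval_X, mul_zero, Pi.zero_apply]
      exact heq ▸ key
    · intro s hs
      refine ⟨fun i => (![0, -1, -1] : Fin 3 → ℂ) i * s,
        fun i => (![0, -1, -1] : Fin 3 → ℂ) i * s, ?_, ⟨?_, ?_⟩, 0, ?_⟩
      · funext w
        cases w <;> simp only [Sum.elim_inl, Sum.elim_inr, Polynomial.eval_add,
          Polynomial.eval_mul, Polynomial.eval_C, Polynomial.eval_X]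
      · rw [eval_Fcm]
        show ((0 : ℂ) * s) ^ 2 - 2 * ((0 : ℂ) * s) * ((-1 : ℂ) * s) + ((-1 : ℂ) * s) ^ 2
          - 2 * ((0 : ℂ) * s) * ((-1 : ℂ) * s) - 2 * ((-1 : ℂ) * s) * ((-1 : ℂ) * s)
          + ((-1 : ℂ) * s) ^ 2 = 0
        ring
      · intro h
        have h0' : (4 : ℂ) * ((0 : ℂ) * s) -
            2 * ((0 : ℂ) * s + (-1 : ℂ) * s + (-1 : ℂ) * s) = 0 := by
          have := congrFun h 0
          rw [grad_Fcm] at this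
          exact this
        exact hs (by linear_combination h0' / 4)
      · funext i
        simp
  · -- curve with limit (u, 0)
    have key := curve_mem_zclosure
      {w | ∃ u' x' : Fin 3 → ℂ, w = Sum.elim u' x' ∧ x' ∈ RegL Fcm ∧
        ∃ t : ℂ, u' - x' = t • grad Fcm x'}
      (Sum.elim
        (fun i => Polynomial.C ((u i - (u 0 + u 1 + u 2)) / 4) * Polynomial.X + Polynomial.C (u i))
        (fun i => Polynomial.C ((u i - (u 0 + u 1 + u 2)) / 4) * Polynomial.X)) ?_
    · have heq : (fun w => (Sum.elim
          (fun i => Polynomial.C ((u i - (u 0 + u 1 + u 2)) / 4) * Polynomial.X + Polynomial.C (u i))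
          (fun i => Polynomial.C ((u i - (u 0 + u 1 + u 2)) / 4) * Polynomial.X) w).eval (0 : ℂ))
          = Sum.elim u (0 : Fin 3 → ℂ) := by
        funext w
        cases w <;> simp only [Sum.elim_inl, Sum.elim_inr, Polynomial.eval_add,
          Polynomial.eval_mul, Polynomial.eval_C, Polynomial.eval_X, mul_zero, zero_add,
          Pi.zero_apply]
      exact heq ▸ key
    · intro s hs
      have hgr : ∀ i, grad Fcm (fun j => (u j - (u 0 + u 1 + u 2)) / 4 * s) i = s * u i := by
        intro i
        rw [grad_Fcm]
        ring
      refine ⟨fun i => (u i - (u 0 + u 1 + u 2)) / 4 * s + u i,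
        fun i => (u i - (u 0 + u 1 + u 2)) / 4 * s, ?_, ⟨?_, ?_⟩, 1 / s, ?_⟩
      · funext w
        cases w <;> simp only [Sum.elim_inl, Sum.elim_inr, Polynomial.eval_add,
          Polynomial.eval_mul, Polynomial.eval_C, Polynomial.eval_X]
      · rw [eval_Fcm]
        linear_combination (-(s ^ 2) / 4) * hu'
      · intro h
        apply hu0
        funext i
        have := congrFun h i
        rw [hgr i] at this
        simp only [Pi.zero_apply] at this ⊢
        rcases mul_eq_zero.mp this with h' | h'
        · exact absurd h' hs
        · exact h'
      · funext i
        simp only [Pi.sub_apply, Pi.smul_apply, smul_eq_mul, hgr i]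
        field_simp
        ring

lemma DI_eq : DI Fcm = Vg := subset_antisymm DI_sub DI_sup


/-- For the Cayley–Menger variety `f = x₁² - 2x₁x₂ + x₂² - 2x₁x₃ - 2x₂x₃ + x₃²`,
the ED data isotropic locus equals the dual variety `V(x₁x₂ + x₁x₃ + x₂x₃)`, and it is
strictly contained in `V(f)* + (Q ∩ V(f))`. -/
theorem DI_cayley_menger :
    DI (X 0 ^ 2 - 2 * X 0 * X 1 + X 1 ^ 2 - 2 * X 0 * X 2 - 2 * X 1 * X 2 + X 2 ^ 2 :
        MvPolynomial (Fin 3) ℂ) =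
      dualV (X 0 ^ 2 - 2 * X 0 * X 1 + X 1 ^ 2 - 2 * X 0 * X 2 - 2 * X 1 * X 2 + X 2 ^ 2 :
        MvPolynomial (Fin 3) ℂ) ∧
    dualV (X 0 ^ 2 - 2 * X 0 * X 1 + X 1 ^ 2 - 2 * X 0 * X 2 - 2 * X 1 * X 2 + X 2 ^ 2 :
        MvPolynomial (Fin 3) ℂ) =
      {y : Fin 3 → ℂ | y 0 * y 1 + y 0 * y 2 + y 1 * y 2 = 0} ∧
    DI (X 0 ^ 2 - 2 * X 0 * X 1 + X 1 ^ 2 - 2 * X 0 * X 2 - 2 * X 1 * X 2 + X 2 ^ 2 :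
        MvPolynomial (Fin 3) ℂ) ⊂
      dualV (X 0 ^ 2 - 2 * X 0 * X 1 + X 1 ^ 2 - 2 * X 0 * X 2 - 2 * X 1 * X 2 + X 2 ^ 2 :
          MvPolynomial (Fin 3) ℂ) +
        (isoQ 3 ∩ Vp (X 0 ^ 2 - 2 * X 0 * X 1 + X 1 ^ 2 - 2 * X 0 * X 2 - 2 * X 1 * X 2 + X 2 ^ 2 :
          MvPolynomial (Fin 3) ℂ)) := by
  have hDI : DI Fcm = Vg := DI_eq
  have hdual : dualV Fcm = Vg := dual_eq
  refine ⟨?_, ?_, ?_⟩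
  · show DI Fcm = dualV Fcm
    rw [hDI, hdual]
  · show dualV Fcm = Vg
    exact hdual
  · show DI Fcm ⊂ dualV Fcm + (isoQ 3 ∩ Vp Fcm)
    rw [hDI, hdual]
    rw [Set.ssubset_iff_of_subset]
    · -- exhibit a point of the sum not in Vg
      obtain ⟨ζ, hζ0⟩ := IsAlgClosed.exists_root
        (k := ℂ) (Polynomial.X ^ 2 + Polynomial.X + 1)
        (by rw [(by compute_degree! :
            (Polynomial.X ^ 2 + Polynomial.X + 1 : Polynomial ℂ).degree = 2)]
            norm_num)
      have hζ : ζ ^ 2 + ζ + 1 = 0 := by simpa [Polynomial.IsRoot] using hζ0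
      have hymem : (![1, 0, 0] : Fin 3 → ℂ) ∈ Vg := by
        show (1 : ℂ) * 0 + 1 * 0 + 0 * 0 = 0
        ring
      have hzmem : (![1, ζ, ζ ^ 2] : Fin 3 → ℂ) ∈ isoQ 3 ∩ Vp Fcm := by
        constructor
        · show ∑ i : Fin 3, (![1, ζ, ζ ^ 2] : Fin 3 → ℂ) i ^ 2 = 0
          simp [Fin.sum_univ_three]
          linear_combination (ζ ^ 2 - ζ + 1) * hζ
        · show eval ![1, ζ, ζ ^ 2] Fcm = 0
          rw [eval_Fcm]
          simp
          linear_combination (ζ ^ 2 - 3 * ζ + 1) * hζ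
      refine ⟨![1, 0, 0] + ![1, ζ, ζ ^ 2], Set.add_mem_add hymem hzmem, ?_⟩
      intro hmem
      have : (1 + 1 : ℂ) * (0 + ζ) + (1 + 1) * (0 + ζ ^ 2) + (0 + ζ) * (0 + ζ ^ 2) = 0 := hmem
      have hone : (1 : ℂ) = 0 := by linear_combination (ζ + 1) * hζ - this
      exact one_ne_zero hone
    · intro y hy
      have := Set.add_mem_add hy zero_mem_iso_Vp
      simpa using this
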